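/- For a₀ ≤ a < b < c ≤ b₀, if γ^α(F,a,c) < ∞, then γ^α(F,a,c) = γ^α(F,a,b) + γ^α(F,b,c). -/

import Mathlib

open Set
open scoped ENNReal

structure Subdivision (a b : ℝ) where
  k : ℕ
  t : ℕ → ℝ
  first : t 0 = a
  last : t k = b
  mono : ∀ i < k, t i < t (i + 1)

def Subdivision.MeshLE {a b : ℝ} (P : Subdivision a b) (δ : ℝ) : Prop :=
  ∀ i < P.k, P.t (i + 1) - P.t i ≤ δ

noncomputable def sigmaSum {n : ℕ} (α : ℝ) (w : ℝ → EuclideanSpace ℝ (Fin n))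
    {a b : ℝ} (P : Subdivision a b) : ℝ :=
  (∑ i ∈ Finset.range P.k, ‖w (P.t (i + 1)) - w (P.t i)‖ ^ α) / Real.Gamma (α + 1)

noncomputable def gammaDelta {n : ℕ} (α : ℝ) (w : ℝ → EuclideanSpace ℝ (Fin n))
    (a b δ : ℝ) : ℝ≥0∞ :=
  ⨅ (P : Subdivision a b) (_ : P.MeshLE δ), ENNReal.ofReal (sigmaSum α w P)

noncomputable def massFn {n : ℕ} (α : ℝ) (w : ℝ → EuclideanSpace ℝ (Fin n))
    (a b : ℝ) : ℝ≥0∞ :=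
  ⨆ (δ : ℝ) (_ : 0 < δ), gammaDelta α w a b δ

-- aux lemmas
lemma subdiv_lt {a b : ℝ} (P : Subdivision a b) : ∀ {i j : ℕ}, i < j → j ≤ P.k → P.t i < P.t j := by
  intro i j hij hj
  induction j with
  | zero => omega
  | succ j ih =>
    rcases Nat.lt_succ_iff_lt_or_eq.mp hij with h' | h'
    · exact (ih h' (by omega)).trans (P.mono j (by omega))
    · subst h'; exact P.mono i (by omega)

lemma subdiv_le {a b : ℝ} (P : Subdivision a b) {i j : ℕ} (hij : i ≤ j) (hj : j ≤ P.k) :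
    P.t i ≤ P.t j := by
  rcases eq_or_lt_of_le hij with h | h
  · subst h; rfl
  · exact (subdiv_lt P h hj).le

lemma subdiv_mem {a b : ℝ} (P : Subdivision a b) {i : ℕ} (hi : i ≤ P.k) :
    P.t i ∈ Icc a b := by
  have h1 := subdiv_le P (Nat.zero_le i) hi
  have h2 := subdiv_le P hi (le_refl P.k)
  rw [P.first] at h1; rw [P.last] at h2
  exact ⟨h1, h2⟩

variable {n : ℕ} {α : ℝ} {w : ℝ → EuclideanSpace ℝ (Fin n)}

lemma sigmaSum_nonneg (hα1 : (1:ℝ) ≤ α) {a b : ℝ} (P : Subdivision a b) :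
    0 ≤ sigmaSum α w P := by
  apply div_nonneg
  · exact Finset.sum_nonneg fun i _ => Real.rpow_nonneg (norm_nonneg _) α
  · exact (Real.Gamma_pos_of_pos (by linarith)).le

def concatSub {a b c : ℝ} (P : Subdivision a b) (Q : Subdivision b c) : Subdivision a c where
  k := P.k + Q.k
  t := fun i => if i < P.k then P.t i else Q.t (i - P.k)
  first := by
    by_cases h : 0 < P.k
    · simp [h, P.first]
    · have hk : P.k = 0 := by omega
      have h2 := P.last
      rw [hk] at h2
      have : b = a := h2.symm.trans P.first
      simp [h, Q.first, this]
  last := by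
    have h : ¬ (P.k + Q.k < P.k) := by omega
    simp [h, Q.last]
  mono := by
    intro i hi
    rcases lt_trichotomy (i+1) P.k with h | h | h
    · have hi' : i < P.k := by omega
      simpa [h, hi'] using P.mono i hi'
    · have hi' : i < P.k := by omega
      have h2 : ¬ (i + 1 < P.k) := by omega
      have h3 : i + 1 - P.k = 0 := by omega
      have hq : Q.t 0 = P.t (i+1) := by rw [Q.first, h]; exact P.last.symm
      simp only [if_pos hi', if_neg h2, h3, hq]
      exact P.mono i hi'
    · have hi' : ¬ (i < P.k) := by omega
      have h2 : ¬ (i + 1 < P.k) := by omega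
      have h3 : i + 1 - P.k = (i - P.k) + 1 := by omega
      simp only [if_neg hi', if_neg h2, h3]
      exact Q.mono (i - P.k) (by omega)

lemma concat_mesh {a b c δ : ℝ} (P : Subdivision a b) (Q : Subdivision b c)
    (hP : P.MeshLE δ) (hQ : Q.MeshLE δ) : (concatSub P Q).MeshLE δ := by
  intro i hi
  have hi' : i < P.k + Q.k := hi
  show (if i + 1 < P.k then P.t (i+1) else Q.t (i+1-P.k)) -
      (if i < P.k then P.t i else Q.t (i - P.k)) ≤ δ
  rcases lt_trichotomy (i+1) P.k with h | h | h
  · have hi2 : i < P.k := by omega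
    simpa [h, hi2] using hP i hi2
  · have hi2 : i < P.k := by omega
    have h2 : ¬ (i + 1 < P.k) := by omega
    have h3 : i + 1 - P.k = 0 := by omega
    have hq : Q.t 0 = P.t (i+1) := by rw [Q.first, h]; exact P.last.symm
    simp only [if_pos hi2, if_neg h2, h3, hq]
    exact hP i hi2
  · have hi2 : ¬ (i < P.k) := by omega
    have h2 : ¬ (i + 1 < P.k) := by omega
    have h3 : i + 1 - P.k = (i - P.k) + 1 := by omega
    simp only [if_neg hi2, if_neg h2, h3]
    exact hQ (i - P.k) (by omega)

lemma concat_sigma {a b c : ℝ} (P : Subdivision a b) (Q : Subdivision b c) :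
    sigmaSum α w (concatSub P Q) = sigmaSum α w P + sigmaSum α w Q := by
  unfold sigmaSum
  rw [← add_div]
  congr 1
  show (∑ i ∈ Finset.range (P.k + Q.k),
      ‖w ((concatSub P Q).t (i+1)) - w ((concatSub P Q).t i)‖ ^ α) = _
  rw [Finset.sum_range_add]
  congr 1
  · apply Finset.sum_congr rfl
    intro i hi
    have hi' : i < P.k := Finset.mem_range.mp hi
    have h1 : (concatSub P Q).t i = P.t i := if_pos hi'
    have h2 : (concatSub P Q).t (i+1) = P.t (i+1) := by
      show (if i + 1 < P.k then P.t (i+1) else Q.t (i+1-P.k)) = P.t (i+1)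
      rcases lt_or_eq_of_le (Nat.succ_le_of_lt hi') with h | h
      · exact if_pos h
      · have h2 : ¬ (i + 1 < P.k) := by omega
        have h3 : i + 1 - P.k = 0 := by omega
        rw [if_neg h2, h3, Q.first, show i + 1 = P.k from h]; exact P.last.symm
    rw [h1, h2]
  · apply Finset.sum_congr rfl
    intro i hi
    have hi' : i < Q.k := Finset.mem_range.mp hi
    have h1 : (concatSub P Q).t (P.k + i) = Q.t i := by
      show (if P.k + i < P.k then _ else Q.t (P.k + i - P.k)) = Q.t i
      rw [if_neg (by omega)]; congr 1; omega
    have h2 : (concatSub P Q).t (P.k + i + 1) = Q.t (i + 1) := by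
      show (if P.k + i + 1 < P.k then _ else Q.t (P.k + i + 1 - P.k)) = Q.t (i+1)
      rw [if_neg (by omega)]; congr 1; omega
    rw [h1, h2]

lemma split_sub (hα1 : (1:ℝ) ≤ α) {a b c δ M : ℝ} (hab : a < b) (hbc : b < c) (hM : 0 ≤ M)
    (R : Subdivision a c) (hmesh : R.MeshLE δ)
    (hMod : ∀ x ∈ Icc a c, ∀ y ∈ Icc a c, |x - y| ≤ δ → ‖w x - w y‖ ≤ M) :
    ∃ (P : Subdivision a b) (Q : Subdivision b c), P.MeshLE δ ∧ Q.MeshLE δ ∧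
      sigmaSum α w P + sigmaSum α w Q ≤ sigmaSum α w R + 2 * M ^ α / Real.Gamma (α + 1) := by
  have hα0 : (0:ℝ) ≤ α := by linarith
  have hΓ : 0 < Real.Gamma (α + 1) := Real.Gamma_pos_of_pos (by linarith)
  have hkpos : 0 < R.k := by
    by_contra h
    have hk : R.k = 0 := by omega
    have h2 := R.last
    rw [hk, R.first] at h2
    linarith [hab.trans hbc]
  have hex : ∃ i, b ≤ R.t i := ⟨R.k, by rw [R.last]; exact (hbc.le)⟩
  obtain ⟨m, hbm, hltm, hm_le, hm_pos⟩ :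
      ∃ m, b ≤ R.t m ∧ (∀ i < m, R.t i < b) ∧ m ≤ R.k ∧ 0 < m := by
    refine ⟨Nat.find hex, Nat.find_spec hex,
      fun i hi => lt_of_not_ge (Nat.find_min hex hi),
      Nat.find_min' hex (by rw [R.last]; exact hbc.le), ?_⟩
    by_contra h
    have h0 : Nat.find hex = 0 := by omega
    have := Nat.find_spec hex
    rw [h0, R.first] at this
    linarith
  have hnonneg2 : 0 ≤ 2 * M ^ α / Real.Gamma (α + 1) :=
    div_nonneg (mul_nonneg (by norm_num) (Real.rpow_nonneg hM α)) hΓ.le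
  rcases eq_or_lt_of_le hbm with heq | hlt2
  · -- b = R.t m
    have hm_lt : m < R.k := by
      by_contra h
      have hmk : m = R.k := by omega
      rw [hmk, R.last] at heq
      exact absurd heq hbc.ne
    refine ⟨⟨m, R.t, R.first, heq.symm, fun i hi => R.mono i (by have hi2 : i < m := hi; omega)⟩,
        ⟨R.k - m, fun i => R.t (m + i), ?_, ?_,
          fun i hi => R.mono (m + i) (by have hi2 : i < R.k - m := hi; omega)⟩,
        fun i hi => hmesh i (by have hi2 : i < m := hi; omega),
        fun i hi => hmesh (m + i) (by have hi2 : i < R.k - m := hi; omega), ?_⟩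
    · show R.t (m + 0) = b
      rw [Nat.add_zero]; exact heq.symm
    · show R.t (m + (R.k - m)) = c
      rw [show m + (R.k - m) = R.k by omega]; exact R.last
    · simp only [sigmaSum]
      rw [← add_div]
      have hsums : (∑ i ∈ Finset.range m, ‖w (R.t (i + 1)) - w (R.t i)‖ ^ α)
          + (∑ i ∈ Finset.range (R.k - m), ‖w (R.t (m + (i + 1))) - w (R.t (m + i))‖ ^ α)
          = ∑ i ∈ Finset.range R.k, ‖w (R.t (i + 1)) - w (R.t i)‖ ^ α := by
        conv_rhs => rw [show R.k = m + (R.k - m) by omega, Finset.sum_range_add]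
        rfl
      rw [hsums]
      have h0 : (∑ i ∈ Finset.range R.k, ‖w (R.t (i + 1)) - w (R.t i)‖ ^ α) / Real.Gamma (α+1)
          = sigmaSum α w R := rfl
      rw [h0]
      linarith [sigmaSum_nonneg (w := w) hα1 R]
  · -- b < R.t m
    obtain ⟨m', rfl⟩ : ∃ m', m = m' + 1 := ⟨m - 1, by omega⟩
    refine ⟨⟨m' + 1, fun i => if i < m' + 1 then R.t i else b, ?_, ?_, ?_⟩,
      ⟨R.k - m', fun i => if i = 0 then b else R.t (m' + i), ?_, ?_, ?_⟩,
      ?_, ?_, ?_⟩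
    · show (if 0 < m' + 1 then R.t 0 else b) = a
      rw [if_pos (Nat.succ_pos m')]; exact R.first
    · show (if m' + 1 < m' + 1 then R.t (m' + 1) else b) = b
      rw [if_neg (lt_irrefl _)]
    · -- mono P
      intro i hi
      have hi2 : i < m' + 1 := hi
      show (if i < m' + 1 then R.t i else b) < (if i + 1 < m' + 1 then R.t (i + 1) else b)
      rw [if_pos hi2]
      by_cases h : i + 1 < m' + 1
      · rw [if_pos h]; exact R.mono i (by omega)
      · rw [if_neg h]; exact hltm i (by omega)
    · show (if (0:ℕ) = 0 then b else R.t (m' + 0)) = b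
      rw [if_pos rfl]
    · show (if R.k - m' = 0 then b else R.t (m' + (R.k - m'))) = c
      rw [if_neg (by omega), show m' + (R.k - m') = R.k by omega]; exact R.last
    · -- mono Q
      intro i hi
      have hi2 : i < R.k - m' := hi
      show (if i = 0 then b else R.t (m' + i)) < (if i + 1 = 0 then b else R.t (m' + (i + 1)))
      rw [if_neg (by omega : ¬ i + 1 = 0)]
      by_cases h : i = 0
      · subst h
        rw [if_pos rfl]
        exact hlt2
      · rw [if_neg h]
        exact R.mono (m' + i) (by omega)
    · -- mesh P
      intro i hi
      have hi2 : i < m' + 1 := hi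
      show (if i + 1 < m' + 1 then R.t (i + 1) else b) - (if i < m' + 1 then R.t i else b) ≤ δ
      rw [if_pos hi2]
      by_cases h : i + 1 < m' + 1
      · rw [if_pos h]; exact hmesh i (by omega)
      · rw [if_neg h]
        have hii : i = m' := by omega
        subst hii
        have h1 := hmesh i (by omega)
        have h2 := hltm i (by omega)
        linarith
    · -- mesh Q
      intro i hi
      have hi2 : i < R.k - m' := hi
      show (if i + 1 = 0 then b else R.t (m' + (i + 1))) - (if i = 0 then b else R.t (m' + i)) ≤ δ
      rw [if_neg (by omega : ¬ i + 1 = 0)]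
      by_cases h : i = 0
      · subst h
        rw [if_pos rfl]
        have h1 := hmesh m' (by omega)
        have h2 : R.t m' < b := hltm m' (by omega)
        have h3 : R.t (m' + (0 + 1)) = R.t (m' + 1) := rfl
        rw [h3]
        linarith
      · rw [if_neg h]
        exact hmesh (m' + i) (by omega)
    · -- sums
      simp only [sigmaSum]
      rw [← add_div, ← add_div, div_le_div_iff_of_pos_right hΓ]
      have hb_mem : b ∈ Icc a c := ⟨hab.le, hbc.le⟩
      have htm'_mem : R.t m' ∈ Icc a c := subdiv_mem R (by omega)
      have htm_mem : R.t (m' + 1) ∈ Icc a c := subdiv_mem R (by omega)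
      have hmm' : R.t m' < b := hltm m' (by omega)
      have hmesh' := hmesh m' (by omega)
      have hd1 : |b - R.t m'| ≤ δ := by
        rw [abs_of_nonneg (by linarith)]; linarith
      have hd2 : |R.t (m' + 1) - b| ≤ δ := by
        rw [abs_of_nonneg (by linarith)]; linarith
      have new1 : ‖w b - w (R.t m')‖ ^ α ≤ M ^ α :=
        Real.rpow_le_rpow (norm_nonneg _) (hMod b hb_mem (R.t m') htm'_mem hd1) hα0
      have new2 : ‖w (R.t (m' + 1)) - w b‖ ^ α ≤ M ^ α :=
        Real.rpow_le_rpow (norm_nonneg _) (hMod (R.t (m' + 1)) htm_mem b hb_mem hd2) hα0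
      set f : ℕ → ℝ := fun i => ‖w (R.t (i + 1)) - w (R.t i)‖ ^ α with hf
      have hPsum : (∑ i ∈ Finset.range (m' + 1),
          ‖w (if i + 1 < m' + 1 then R.t (i + 1) else b) -
            w (if i < m' + 1 then R.t i else b)‖ ^ α)
          = (∑ i ∈ Finset.range m', f i) + ‖w b - w (R.t m')‖ ^ α := by
        rw [Finset.sum_range_succ]
        congr 1
        · refine Finset.sum_congr rfl fun i hi => ?_
          have hi' := Finset.mem_range.mp hi
          rw [if_pos (by omega), if_pos (by omega)]
        · rw [if_neg (by omega), if_pos (by omega)]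
      have hq : R.k - m' = (R.k - (m' + 1)) + 1 := by omega
      have hQsum : (∑ i ∈ Finset.range (R.k - m'),
          ‖w (if i + 1 = 0 then b else R.t (m' + (i + 1))) -
            w (if i = 0 then b else R.t (m' + i))‖ ^ α)
          = (∑ i ∈ Finset.range (R.k - (m' + 1)), f (m' + 1 + i))
            + ‖w (R.t (m' + 1)) - w b‖ ^ α := by
        rw [hq, Finset.sum_range_succ']
        congr 1
        · refine Finset.sum_congr rfl fun i hi => ?_
          rw [if_neg (by omega : ¬ i + 1 + 1 = 0), if_neg (by omega : ¬ i + 1 = 0)]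
          simp only [hf]
          have e1 : m' + (i + 1 + 1) = m' + 1 + i + 1 := by omega
          have e2 : m' + (i + 1) = m' + 1 + i := by omega
          rw [e1, e2]
      have hRsum : (∑ i ∈ Finset.range R.k, f i)
          = (∑ i ∈ Finset.range m', f i) + f m'
            + (∑ i ∈ Finset.range (R.k - (m' + 1)), f (m' + 1 + i)) := by
        conv_lhs => rw [show R.k = (m' + 1) + (R.k - (m' + 1)) by omega,
          Finset.sum_range_add, Finset.sum_range_succ]
      have hfm' : 0 ≤ f m' := Real.rpow_nonneg (norm_nonneg _) α
      rw [hPsum, hQsum, hRsum]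
      linarith

lemma gammaDelta_anti {a b : ℝ} {δ1 δ2 : ℝ} (h : δ1 ≤ δ2) :
    gammaDelta α w a b δ2 ≤ gammaDelta α w a b δ1 :=
  le_iInf₂ fun P hP => iInf₂_le P (fun i hi => (hP i hi).trans h)

lemma gammaDelta_subadd (hα1 : (1:ℝ) ≤ α) {a b c : ℝ} (δ : ℝ) :
    gammaDelta α w a c δ ≤ gammaDelta α w a b δ + gammaDelta α w b c δ := by
  have hrw : gammaDelta α w a b δ + gammaDelta α w b c δ
      = ⨅ (P : Subdivision a b) (_ : P.MeshLE δ) (Q : Subdivision b c) (_ : Q.MeshLE δ),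
        (ENNReal.ofReal (sigmaSum α w P) + ENNReal.ofReal (sigmaSum α w Q)) := by
    unfold gammaDelta
    rw [ENNReal.iInf_add]
    refine iInf_congr fun P => ?_
    rw [ENNReal.iInf_add]
    refine iInf_congr fun hP => ?_
    rw [ENNReal.add_iInf]
    refine iInf_congr fun Q => ?_
    rw [ENNReal.add_iInf]
  rw [hrw]
  refine le_iInf fun P => le_iInf fun hP => le_iInf fun Q => le_iInf fun hQ => ?_
  calc gammaDelta α w a c δ ≤ ENNReal.ofReal (sigmaSum α w (concatSub P Q)) := by
        unfold gammaDelta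
        exact iInf₂_le (concatSub P Q) (concat_mesh P Q hP hQ)
    _ = ENNReal.ofReal (sigmaSum α w P) + ENNReal.ofReal (sigmaSum α w Q) := by
        rw [concat_sigma,
          ENNReal.ofReal_add (sigmaSum_nonneg hα1 P) (sigmaSum_nonneg hα1 Q)]

lemma gammaDelta_superadd (hα1 : (1:ℝ) ≤ α) {a₀ b₀ a b c : ℝ}
    (hw : ContinuousOn w (Icc a₀ b₀))
    (ha : a₀ ≤ a) (hab : a < b) (hbc : b < c) (hc : c ≤ b₀) {ε : ℝ} (hε : 0 < ε) :
    ∃ δ₀ > 0, ∀ δ, 0 < δ → δ ≤ δ₀ →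
      gammaDelta α w a b δ + gammaDelta α w b c δ
        ≤ gammaDelta α w a c δ + ENNReal.ofReal ε := by
  have hΓ : 0 < Real.Gamma (α + 1) := Real.Gamma_pos_of_pos (by linarith)
  set M : ℝ := min 1 (ε * Real.Gamma (α + 1) / 2) with hMdef
  have hMpos : 0 < M := lt_min one_pos (by positivity)
  have hu : UniformContinuousOn w (Icc a₀ b₀) :=
    (isCompact_Icc).uniformContinuousOn_of_continuous hw
  rw [Metric.uniformContinuousOn_iff] at hu
  obtain ⟨δ₁, hδ₁, hδprop⟩ := hu M hMpos
  refine ⟨δ₁ / 2, by positivity, fun δ hδ hδle => ?_⟩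
  have hMα : M ^ α ≤ M := by
    calc M ^ α ≤ M ^ (1:ℝ) := Real.rpow_le_rpow_of_exponent_ge hMpos (min_le_left _ _) hα1
      _ = M := Real.rpow_one M
  have hbound : 2 * M ^ α / Real.Gamma (α + 1) ≤ ε := by
    rw [div_le_iff₀ hΓ]
    have h2 : M ≤ ε * Real.Gamma (α + 1) / 2 := min_le_right _ _
    nlinarith
  have hMod : ∀ x ∈ Icc a c, ∀ y ∈ Icc a c, |x - y| ≤ δ → ‖w x - w y‖ ≤ M := by
    intro x hx y hy hxy
    have hx' : x ∈ Icc a₀ b₀ := ⟨le_trans ha hx.1, le_trans hx.2 hc⟩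
    have hy' : y ∈ Icc a₀ b₀ := ⟨le_trans ha hy.1, le_trans hy.2 hc⟩
    have hd : dist x y < δ₁ := by
      rw [Real.dist_eq]
      calc |x - y| ≤ δ := hxy
        _ ≤ δ₁ / 2 := hδle
        _ < δ₁ := by linarith
    have := hδprop x hx' y hy' hd
    rw [dist_eq_norm] at this
    exact this.le
  have key : ∀ (R : Subdivision a c), R.MeshLE δ →
      gammaDelta α w a b δ + gammaDelta α w b c δ
        ≤ ENNReal.ofReal (sigmaSum α w R) + ENNReal.ofReal ε := by
    intro R hR
    obtain ⟨P, Q, hP, hQ, hsum⟩ := split_sub (w := w) hα1 hab hbc hMpos.le R hR hMod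
    calc gammaDelta α w a b δ + gammaDelta α w b c δ
        ≤ ENNReal.ofReal (sigmaSum α w P) + ENNReal.ofReal (sigmaSum α w Q) :=
          add_le_add (iInf₂_le P hP) (iInf₂_le Q hQ)
      _ = ENNReal.ofReal (sigmaSum α w P + sigmaSum α w Q) :=
          (ENNReal.ofReal_add (sigmaSum_nonneg hα1 P) (sigmaSum_nonneg hα1 Q)).symm
      _ ≤ ENNReal.ofReal (sigmaSum α w R + ε) :=
          ENNReal.ofReal_le_ofReal (by linarith)
      _ ≤ ENNReal.ofReal (sigmaSum α w R) + ENNReal.ofReal ε := ENNReal.ofReal_add_le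
  have hrw : gammaDelta α w a c δ + ENNReal.ofReal ε
      = ⨅ (R : Subdivision a c) (_ : R.MeshLE δ),
        (ENNReal.ofReal (sigmaSum α w R) + ENNReal.ofReal ε) := by
    unfold gammaDelta
    rw [ENNReal.iInf_add]
    exact iInf_congr fun R => by rw [ENNReal.iInf_add]
  rw [hrw]
  exact le_iInf fun R => le_iInf fun hR => key R hR


/-- For a₀ ≤ a < b < c ≤ b₀, if γ^α(F,a,c) < ∞, then
γ^α(F,a,c) = γ^α(F,a,b) + γ^α(F,b,c). -/
theorem massFn_additive {n : ℕ} (hn : 1 ≤ n) {a₀ b₀ : ℝ}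
    (w : ℝ → EuclideanSpace ℝ (Fin n))
    (hw : ContinuousOn w (Icc a₀ b₀)) (hinj : InjOn w (Icc a₀ b₀))
    {α : ℝ} (hα : α ∈ Icc (1 : ℝ) (n : ℝ))
    {a b c : ℝ} (ha : a₀ ≤ a) (hab : a < b) (hbc : b < c) (hc : c ≤ b₀)
    (hfin : massFn α w a c ≠ ⊤) :
    massFn α w a c = massFn α w a b + massFn α w b c := by
  obtain ⟨hα1, hαn⟩ := hα
  apply le_antisymm
  · unfold massFn
    refine iSup₂_le fun δ hδ => ?_
    refine (gammaDelta_subadd (b := b) hα1 δ).trans (add_le_add ?_ ?_)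
    · exact le_iSup₂ (f := fun δ (_ : 0 < δ) => gammaDelta α w a b δ) δ hδ
    · exact le_iSup₂ (f := fun δ (_ : 0 < δ) => gammaDelta α w b c δ) δ hδ
  · refine ENNReal.le_of_forall_pos_le_add fun ε hε _ => ?_
    obtain ⟨δ₀, hδ₀, hkey⟩ := gammaDelta_superadd (w := w) hα1 hw ha hab hbc hc
      (ε := (ε : ℝ)) (by exact_mod_cast hε)
    have h1 : massFn α w a b
        ≤ ⨆ d : {d : ℝ // 0 < d ∧ d ≤ δ₀}, gammaDelta α w a b d.1 := by
      unfold massFn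
      refine iSup₂_le fun δ hδ => ?_
      exact (gammaDelta_anti (min_le_left δ δ₀)).trans
        (le_iSup (fun d : {d : ℝ // 0 < d ∧ d ≤ δ₀} => gammaDelta α w a b d.1)
          ⟨min δ δ₀, lt_min hδ hδ₀, min_le_right _ _⟩)
    have h2 : massFn α w b c
        ≤ ⨆ d : {d : ℝ // 0 < d ∧ d ≤ δ₀}, gammaDelta α w b c d.1 := by
      unfold massFn
      refine iSup₂_le fun δ hδ => ?_
      exact (gammaDelta_anti (min_le_left δ δ₀)).trans
        (le_iSup (fun d : {d : ℝ // 0 < d ∧ d ≤ δ₀} => gammaDelta α w b c d.1)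
          ⟨min δ δ₀, lt_min hδ hδ₀, min_le_right _ _⟩)
    have h3 : (⨆ d : {d : ℝ // 0 < d ∧ d ≤ δ₀}, gammaDelta α w a b d.1)
        + (⨆ d : {d : ℝ // 0 < d ∧ d ≤ δ₀}, gammaDelta α w b c d.1)
        = ⨆ d : {d : ℝ // 0 < d ∧ d ≤ δ₀},
            (gammaDelta α w a b d.1 + gammaDelta α w b c d.1) :=
      ENNReal.iSup_add_iSup fun i j =>
        ⟨⟨min i.1 j.1, lt_min i.2.1 j.2.1, (min_le_left _ _).trans i.2.2⟩,
          add_le_add (gammaDelta_anti (min_le_left _ _)) (gammaDelta_anti (min_le_right _ _))⟩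
    calc massFn α w a b + massFn α w b c
        ≤ (⨆ d : {d : ℝ // 0 < d ∧ d ≤ δ₀}, gammaDelta α w a b d.1)
          + (⨆ d : {d : ℝ // 0 < d ∧ d ≤ δ₀}, gammaDelta α w b c d.1) := add_le_add h1 h2
      _ = ⨆ d : {d : ℝ // 0 < d ∧ d ≤ δ₀},
            (gammaDelta α w a b d.1 + gammaDelta α w b c d.1) := h3
      _ ≤ massFn α w a c + ↑ε := by
          refine iSup_le fun d => (hkey d.1 d.2.1 d.2.2).trans (add_le_add ?_ ?_)
          · unfold massFn
            exact le_iSup₂ (f := fun δ (_ : 0 < δ) => gammaDelta α w a c δ) d.1 d.2.1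
          · exact le_of_eq ENNReal.ofReal_coe_nnreal
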